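/- Let δ ∈ (0,1) and fix s = b+c ∈ (0,1). Consider the equation (d/a)^{(1−δ)/2} = [ (1 + (δ^{−2}−1)a) / (1 + (δ^{−2}−1)d) ]^{(1+δ)/2} for a,d > 0 with a + d = 1 − s. Then the only solution is a = d. -/
import Mathlib


open Real

/-- For fixed `b + c = s`, the equation
`(d/a)^{(1−δ)/2} = [(1+(δ⁻²−1)a)/(1+(δ⁻²−1)d)]^{(1+δ)/2}` has `a = d` as its only
solution among positive `a, d` with `a + d = 1 - s`. -/
theorem symmetric_solution_unique (δ s a d : ℝ) (hδ : δ ∈ Set.Ioo (0:ℝ) 1)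
    (hs : s ∈ Set.Ioo (0:ℝ) 1) (ha : 0 < a) (hd : 0 < d) (had : a + d = 1 - s)
    (heq : (d/a) ^ ((1-δ)/2) =
      ((1 + (1/δ^2 - 1)*a) / (1 + (1/δ^2 - 1)*d)) ^ ((1+δ)/2)) :
    a = d := by
  obtain ⟨hδ0, hδ1⟩ := hδ
  have hk : 0 < 1/δ^2 - 1 := by
    have h2 : δ^2 < 1 := by nlinarith
    have : 1 < 1/δ^2 := by rw [lt_div_iff₀ (by positivity : (0:ℝ) < δ^2)]; linarith
    linarith
  have he1 : 0 < (1-δ)/2 := by linarith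
  have he2 : 0 < (1+δ)/2 := by linarith
  have hpa : 0 < 1 + (1/δ^2 - 1)*a := by nlinarith
  have hpd : 0 < 1 + (1/δ^2 - 1)*d := by nlinarith
  rcases lt_trichotomy a d with h | h | h
  · exfalso
    have h1 : 1 < (d/a) ^ ((1-δ)/2) :=
      Real.one_lt_rpow_iff_of_pos (div_pos hd ha) |>.mpr
        (Or.inl ⟨(one_lt_div ha).mpr h, he1⟩)
    have hr : (1 + (1/δ^2 - 1)*a) / (1 + (1/δ^2 - 1)*d) < 1 := by
      rw [div_lt_one hpd]; nlinarith
    have h2 : ((1 + (1/δ^2 - 1)*a) / (1 + (1/δ^2 - 1)*d)) ^ ((1+δ)/2) < 1 :=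
      Real.rpow_lt_one (by positivity) hr he2
    linarith [heq ▸ h1]
  · exact h
  · exfalso
    have h1 : (d/a) ^ ((1-δ)/2) < 1 :=
      Real.rpow_lt_one (by positivity) ((div_lt_one ha).mpr h) he1
    have hr : 1 < (1 + (1/δ^2 - 1)*a) / (1 + (1/δ^2 - 1)*d) := by
      rw [lt_div_iff₀ hpd]; nlinarith
    have h2 : 1 < ((1 + (1/δ^2 - 1)*a) / (1 + (1/δ^2 - 1)*d)) ^ ((1+δ)/2) :=
      Real.one_lt_rpow_iff_of_pos (by positivity) |>.mpr (Or.inl ⟨hr, he2⟩)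
    linarith [heq ▸ h1]
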